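/- In F_p, Σ_{r=1}^{p-1} Σ_{n=1}^{r-1} [(p+t)!/(r+t+1)!] · [(r+1)!/(n+1)!] · [(n+2t)!/(2t)!] ≡ 0 (mod p), where all bracketed quotients are interpreted as the integer products of consecutive integers they represent, and t is the integer with 3t ≡ 1 (mod p), t = (2p+1)/3 or (p+1)/3 according as p ≡ 1 or 2 (mod 3). (This is the claim β₁(p) = 0.) -/

import Mathlib

open Finset

private def AA (p t r : ℕ) : ZMod p := ∏ i ∈ Finset.Icc (r + t + 2) (p + t), (i : ZMod p)
private def BB (p n r : ℕ) : ZMod p := ∏ i ∈ Finset.Icc (n + 2) (r + 1), (i : ZMod p)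
private def CC (p t n : ℕ) : ZMod p := ∏ i ∈ Finset.Icc (2 * t + 1) (n + 2 * t), (i : ZMod p)
private def FF (p r : ℕ) : ZMod p := ∏ i ∈ Finset.Icc 2 (r + 1), (i : ZMod p)
private def gg (p t r n : ℕ) : ZMod p :=
  (∏ i ∈ Finset.Icc (n + 1) (r + 1), (i : ZMod p)) * CC p t n
private def uu (p t r : ℕ) : ZMod p := AA p t r * FF p r * ((r : ZMod p) + 2)
private def ww (p t r : ℕ) : ZMod p :=
  AA p t r * CC p t r * (r : ZMod p) * ((r : ZMod p) + 2 * (t : ZMod p) + 1)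

private lemma prod_Icc_bot {M : Type*} [CommMonoid M] (f : ℕ → M) {a b : ℕ} (h : a ≤ b) :
    ∏ i ∈ Finset.Icc a b, f i = f a * ∏ i ∈ Finset.Icc (a + 1) b, f i := by
  rw [← Finset.Ico_add_one_right_eq_Icc, Finset.prod_eq_prod_Ico_succ_bot (by omega) f, Finset.Ico_add_one_right_eq_Icc]

private lemma sum_Icc_one_telescope {M : Type*} [AddCommGroup M] (f : ℕ → M) (m : ℕ) :
    ∑ n ∈ Finset.Icc 1 m, (f (n + 1) - f n) = f (m + 1) - f 1 := by
  induction m with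
  | zero => simp
  | succ m ih => rw [Finset.sum_Icc_succ_top (by omega : 1 ≤ m + 1), ih]; abel

/-- β₁(p) = 0:
`∑_{r=1}^{p-1} ∑_{n=1}^{r-1} (p+t)!/(r+t+1)! · (r+1)!/(n+1)! · (n+2t)!/(2t)! ≡ 0 (mod p)`,
where each factorial quotient `a!/b!` denotes the product of the integers from `b+1` to `a`. -/
theorem stmt10 {p : ℕ} (hp : p.Prime) (hp3 : 3 < p) (t : ℕ)
    (ht : 3 * t = if p % 3 = 1 then 2 * p + 1 else p + 1) :
    ∑ r ∈ Finset.Icc 1 (p - 1), ∑ n ∈ Finset.Icc 1 (r - 1),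
      (∏ i ∈ Finset.Icc (r + t + 2) (p + t), (i : ZMod p))
        * (∏ i ∈ Finset.Icc (n + 2) (r + 1), (i : ZMod p))
        * (∏ i ∈ Finset.Icc (2 * t + 1) (n + 2 * t), (i : ZMod p))
      = 0 := by
  haveI := Fact.mk hp
  have hp5 : 5 ≤ p := by
    by_contra h
    interval_cases p
    exact (by decide : ¬ (4 : ℕ).Prime) hp
  have htt : 3 * t = 2 * p + 1 ∨ 3 * t = p + 1 := by
    split_ifs at ht
    · exact Or.inl ht
    · exact Or.inr ht
  clear ht
  have hpz : ((p : ℕ) : ZMod p) = 0 := ZMod.natCast_self p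
  have h3T : (3 : ZMod p) * (t : ZMod p) = 1 := by
    rcases htt with h | h
    · have h' : ((3 * t : ℕ) : ZMod p) = ((2 * p + 1 : ℕ) : ZMod p) := by rw [h]
      push_cast at h'
      rw [hpz] at h'
      linear_combination h'
    · have h' : ((3 * t : ℕ) : ZMod p) = ((p + 1 : ℕ) : ZMod p) := by rw [h]
      push_cast at h'
      rw [hpz] at h'
      linear_combination h'
  have hnz : ∀ a : ℕ, 0 < a → a < p → (a : ZMod p) ≠ 0 := by
    intro a ha hap h
    rw [ZMod.natCast_eq_zero_iff] at h
    exact absurd (Nat.le_of_dvd ha h) (by omega)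
  have h2 : (2 : ZMod p) ≠ 0 := by
    have := hnz 2 (by norm_num) (by omega); simpa using this
  have h4 : (4 : ZMod p) ≠ 0 := by
    have := hnz 4 (by norm_num) (by omega); simpa using this
  have h2T : 2 * (t : ZMod p) ≠ 0 := fun h => h2 (by linear_combination 3 * h - 2 * h3T)
  have h1T : 1 - (t : ZMod p) ≠ 0 := fun h => h2 (by linear_combination 3 * h + h3T)
  have hT1 : (t : ZMod p) + 1 ≠ 0 := fun h => h4 (by linear_combination 3 * h - h3T)
  -- step lemmas for extracting boundary factors
  have hAstep : ∀ r, 1 ≤ r → r ≤ p - 1 →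
      AA p t (r - 1) = ((r + t + 1 : ℕ) : ZMod p) * AA p t r := by
    intro r h1 h2
    unfold AA
    have e : r - 1 + t + 2 = r + t + 1 := by omega
    rw [e, prod_Icc_bot _ (by omega : r + t + 1 ≤ p + t)]
  have hFstep : ∀ r, 1 ≤ r → FF p r = FF p (r - 1) * ((r + 1 : ℕ) : ZMod p) := by
    intro r h1
    unfold FF
    have e : r - 1 + 1 = r := by omega
    rw [e, Finset.prod_Icc_succ_top (by omega : 2 ≤ r + 1)]
  have hCstep : ∀ r, 1 ≤ r → CC p t r = CC p t (r - 1) * ((r + 2 * t : ℕ) : ZMod p) := by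
    intro r h1
    unfold CC
    have e : r + 2 * t = (r - 1 + 2 * t) + 1 := by omega
    rw [e, Finset.prod_Icc_succ_top (by omega)]
  -- vanishing boundary terms
  have hA0 : AA p t 0 = 0 := by
    unfold AA
    apply Finset.prod_eq_zero (i := p)
    · rw [Finset.mem_Icc]; omega
    · exact hpz
  have hF0 : FF p (p - 1) = 0 := by
    unfold FF
    apply Finset.prod_eq_zero (i := p)
    · rw [Finset.mem_Icc]; omega
    · exact hpz
  have hC0 : CC p t (p - 1) = 0 := by
    unfold CC
    rcases htt with h | h
    · apply Finset.prod_eq_zero (i := 2 * p)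
      · rw [Finset.mem_Icc]; omega
      · push_cast [hpz]; ring
    · apply Finset.prod_eq_zero (i := p)
      · rw [Finset.mem_Icc]; omega
      · exact hpz
  -- inner telescoping step
  have hstep : ∀ r n : ℕ, n + 1 ≤ r →
      gg p t r (n + 1) - gg p t r n = 2 * (t : ZMod p) * (BB p n r * CC p t n) := by
    intro r n hn
    have e1 : (∏ i ∈ Finset.Icc (n + 1) (r + 1), (i : ZMod p))
        = ((n + 1 : ℕ) : ZMod p) * ∏ i ∈ Finset.Icc (n + 2) (r + 1), (i : ZMod p) := by
      rw [prod_Icc_bot _ (by omega : n + 1 ≤ r + 1)]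
    have e2 : CC p t (n + 1) = CC p t n * ((n + 2 * t + 1 : ℕ) : ZMod p) := by
      unfold CC
      have e : n + 1 + 2 * t = (n + 2 * t) + 1 := by omega
      rw [e, Finset.prod_Icc_succ_top (by omega)]
    unfold gg BB
    have e3 : n + 1 + 1 = n + 2 := by omega
    rw [e3, e2, e1]
    push_cast
    ring
  -- inner sum evaluation
  have hinner : ∀ r, 1 ≤ r →
      2 * (t : ZMod p) * ∑ n ∈ Finset.Icc 1 (r - 1), (BB p n r * CC p t n)
        = ((r + 1 : ℕ) : ZMod p) * CC p t r - ((2 * t + 1 : ℕ) : ZMod p) * FF p r := by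
    intro r hr1
    rw [Finset.mul_sum]
    have hc : ∀ n ∈ Finset.Icc 1 (r - 1),
        2 * (t : ZMod p) * (BB p n r * CC p t n) = gg p t r (n + 1) - gg p t r n := by
      intro n hn
      rw [Finset.mem_Icc] at hn
      exact (hstep r n (by omega)).symm
    rw [Finset.sum_congr rfl hc, sum_Icc_one_telescope (gg p t r) (r - 1)]
    have e : r - 1 + 1 = r := by omega
    rw [e]
    have e1 : gg p t r r = ((r + 1 : ℕ) : ZMod p) * CC p t r := by
      unfold gg
      rw [Finset.Icc_self, Finset.prod_singleton]
    have e2 : gg p t r 1 = FF p r * ((2 * t + 1 : ℕ) : ZMod p) := by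
      unfold gg CC FF
      have e3 : (1 : ℕ) + 2 * t = 2 * t + 1 := by omega
      have e4 : (1 : ℕ) + 1 = 2 := rfl
      rw [e3, Finset.Icc_self, Finset.prod_singleton, e4]
    rw [e1, e2]
    ring
  -- outer telescoping steps
  have hustep : ∀ r, 1 ≤ r → r ≤ p - 1 →
      uu p t r - uu p t (r - 1) = (1 - (t : ZMod p)) * (AA p t r * FF p r) := by
    intro r h1 h2
    unfold uu
    rw [hAstep r h1 h2, hFstep r h1]
    have hc : ((r - 1 : ℕ) : ZMod p) = (r : ZMod p) - 1 := by
      rw [Nat.cast_sub h1]; norm_num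
    rw [hc]
    push_cast
    ring
  have hwstep : ∀ r, 1 ≤ r → r ≤ p - 1 →
      ww p t r - ww p t (r - 1)
        = ((t : ZMod p) + 1) * (AA p t r * (((r + 1 : ℕ) : ZMod p) * CC p t r)) := by
    intro r h1 h2
    unfold ww
    rw [hAstep r h1 h2, hCstep r h1]
    have hc : ((r - 1 : ℕ) : ZMod p) = (r : ZMod p) - 1 := by
      rw [Nat.cast_sub h1]; norm_num
    rw [hc]
    push_cast
    ring
  -- the two outer sums vanish
  have hS1 : ∑ r ∈ Finset.Icc 1 (p - 1), AA p t r * FF p r = 0 := by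
    have hz : (1 - (t : ZMod p)) * ∑ r ∈ Finset.Icc 1 (p - 1), AA p t r * FF p r = 0 := by
      rw [Finset.mul_sum]
      have hc : ∀ r ∈ Finset.Icc 1 (p - 1), (1 - (t : ZMod p)) * (AA p t r * FF p r)
          = (fun k => uu p t (k - 1)) (r + 1) - (fun k => uu p t (k - 1)) r := by
        intro r hr
        rw [Finset.mem_Icc] at hr
        dsimp only
        have e : r + 1 - 1 = r := by omega
        rw [e]
        exact (hustep r hr.1 hr.2).symm
      rw [Finset.sum_congr rfl hc, sum_Icc_one_telescope (fun k => uu p t (k - 1)) (p - 1)]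
      have e1 : p - 1 + 1 - 1 = p - 1 := by omega
      have e2 : (1 : ℕ) - 1 = 0 := rfl
      rw [e1, e2]
      unfold uu
      rw [hF0, hA0]
      ring
    rcases mul_eq_zero.mp hz with h | h
    · exact absurd h h1T
    · exact h
  have hS2 : ∑ r ∈ Finset.Icc 1 (p - 1),
      AA p t r * (((r + 1 : ℕ) : ZMod p) * CC p t r) = 0 := by
    have hz : ((t : ZMod p) + 1) * ∑ r ∈ Finset.Icc 1 (p - 1),
        AA p t r * (((r + 1 : ℕ) : ZMod p) * CC p t r) = 0 := by
      rw [Finset.mul_sum]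
      have hc : ∀ r ∈ Finset.Icc 1 (p - 1),
          ((t : ZMod p) + 1) * (AA p t r * (((r + 1 : ℕ) : ZMod p) * CC p t r))
          = (fun k => ww p t (k - 1)) (r + 1) - (fun k => ww p t (k - 1)) r := by
        intro r hr
        rw [Finset.mem_Icc] at hr
        dsimp only
        have e : r + 1 - 1 = r := by omega
        rw [e]
        exact (hwstep r hr.1 hr.2).symm
      rw [Finset.sum_congr rfl hc, sum_Icc_one_telescope (fun k => ww p t (k - 1)) (p - 1)]
      have e1 : p - 1 + 1 - 1 = p - 1 := by omega
      have e2 : (1 : ℕ) - 1 = 0 := rfl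
      rw [e1, e2]
      unfold ww
      rw [hC0]
      push_cast
      ring
    rcases mul_eq_zero.mp hz with h | h
    · exact absurd h hT1
    · exact h
  -- assemble
  show ∑ r ∈ Finset.Icc 1 (p - 1), ∑ n ∈ Finset.Icc 1 (r - 1),
      AA p t r * BB p n r * CC p t n = 0
  have hmain : 2 * (t : ZMod p) * ∑ r ∈ Finset.Icc 1 (p - 1),
      ∑ n ∈ Finset.Icc 1 (r - 1), AA p t r * BB p n r * CC p t n = 0 := by
    rw [Finset.mul_sum]
    have hterm : ∀ r ∈ Finset.Icc 1 (p - 1),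
        2 * (t : ZMod p) * ∑ n ∈ Finset.Icc 1 (r - 1), AA p t r * BB p n r * CC p t n
        = AA p t r * (((r + 1 : ℕ) : ZMod p) * CC p t r)
          - ((2 * t + 1 : ℕ) : ZMod p) * (AA p t r * FF p r) := by
      intro r hr
      rw [Finset.mem_Icc] at hr
      have hpull : ∀ n ∈ Finset.Icc 1 (r - 1),
          AA p t r * BB p n r * CC p t n = AA p t r * (BB p n r * CC p t n) :=
        fun n _ => by ring
      rw [Finset.sum_congr rfl hpull, ← Finset.mul_sum,
        show 2 * (t : ZMod p) * (AA p t r * ∑ n ∈ Finset.Icc 1 (r - 1), BB p n r * CC p t n)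
          = AA p t r * (2 * (t : ZMod p) * ∑ n ∈ Finset.Icc 1 (r - 1), BB p n r * CC p t n)
          from by ring,
        hinner r hr.1]
      ring
    rw [Finset.sum_congr rfl hterm, Finset.sum_sub_distrib, hS2, ← Finset.mul_sum, hS1]
    ring
  rcases mul_eq_zero.mp hmain with h | h
  · exact absurd h h2T
  · exact h
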